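/- There exists a constant C > 0 such that for all sufficiently large n there is a family of simple graphs on n vertices that are pairwise non-isomorphic, each of which is an interval graph, and whose cardinality is at least 2^(n·log₂ n − 2n·log₂ log₂ n − C·n). Equivalently, the number I_n of unlabeled (isomorphism classes of) interval graphs on n vertices satisfies log₂ I_n ≥ n·log₂ n − 2n·log₂ log₂ n − O(n). -/

import Mathlib

/-- A simple graph on `Fin n` is an interval graph if it has a realization by
closed real intervals: adjacency of distinct vertices is equivalent to the
corresponding intervals intersecting. -/
def IsIntervalGraph {n : ℕ} (G : SimpleGraph (Fin n)) : Prop :=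
  ∃ l r : Fin n → ℝ, (∀ v, l v ≤ r v) ∧
    ∀ u v : Fin n, u ≠ v →
      (G.Adj u v ↔ (Set.Icc (l u) (r u) ∩ Set.Icc (l v) (r v)).Nonempty)

namespace IGLB

open Finset

/-! ### The interval graph associated to a family of intervals -/

def IG (n : ℕ) (l r : Fin n → ℝ) : SimpleGraph (Fin n) where
  Adj u v := u ≠ v ∧ (Set.Icc (l u) (r u) ∩ Set.Icc (l v) (r v)).Nonempty
  symm := ⟨fun u v h => ⟨h.1.symm, by rw [Set.inter_comm]; exact h.2⟩⟩
  loopless := ⟨fun v h => h.1 rfl⟩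

lemma isInterval_IG {n : ℕ} {l r : Fin n → ℝ} (h : ∀ v, l v ≤ r v) : IsIntervalGraph (IG n l r) :=
  ⟨l, r, h, fun _ _ _ => ⟨fun a => a.2, fun a => ⟨‹_›, a⟩⟩⟩

abbrev Pm (m : ℕ) := {p : Fin m × Fin m // p.1 ≤ p.2}
abbrev Bv (n m : ℕ) := {v : Fin n // m ≤ v.val}

variable {n m : ℕ}

def lf (g : Bv n m → Pm m) : Fin n → ℝ := fun v =>
  if h : v.val < m then (v.val : ℝ) else ((g ⟨v, not_lt.1 h⟩).1.1.val : ℝ)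
def rf (g : Bv n m → Pm m) : Fin n → ℝ := fun v =>
  if h : v.val < m then (v.val : ℝ) else ((g ⟨v, not_lt.1 h⟩).1.2.val : ℝ)

lemma lf_le_rf (g : Bv n m → Pm m) (v : Fin n) : lf g v ≤ rf g v := by
  unfold lf rf
  split
  · exact le_refl _
  · exact_mod_cast (g _).2

def Gg (g : Bv n m → Pm m) : SimpleGraph (Fin n) := IG n (lf g) (rf g)

lemma Gg_isInterval (g : Bv n m → Pm m) : IsIntervalGraph (Gg g) := isInterval_IG (lf_le_rf g)

lemma Gg_adj_iff (g : Bv n m → Pm m) (u v : Fin n) :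
    (Gg g).Adj u v ↔ u ≠ v ∧ (max (lf g u) (lf g v) ≤ min (rf g u) (rf g v)) := by
  show (u ≠ v ∧ _) ↔ _
  rw [Set.Icc_inter_Icc, Set.nonempty_Icc]

lemma lf_point (g : Bv n m → Pm m) (i : Fin n) (hi : i.val < m) : lf g i = (i.val : ℝ) :=
  dif_pos hi

lemma rf_point (g : Bv n m → Pm m) (i : Fin n) (hi : i.val < m) : rf g i = (i.val : ℝ) :=
  dif_pos hi

lemma lf_int (g : Bv n m → Pm m) (x : Bv n m) : lf g x.1 = ((g x).1.1.val : ℝ) := by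
  have hx : ¬ (x.1.val < m) := not_lt.2 x.2
  unfold lf; rw [dif_neg hx]

lemma rf_int (g : Bv n m → Pm m) (x : Bv n m) : rf g x.1 = ((g x).1.2.val : ℝ) := by
  have hx : ¬ (x.1.val < m) := not_lt.2 x.2
  unfold rf; rw [dif_neg hx]

/-- adjacency of a point vertex with an interval vertex -/
lemma Gg_adj_point (g : Bv n m → Pm m) (i : Fin n) (hi : i.val < m) (x : Bv n m) :
    (Gg g).Adj i x.1 ↔ ((g x).1.1.val ≤ i.val ∧ i.val ≤ (g x).1.2.val) := by
  have hne : i ≠ x.1 := by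
    intro h; rw [h] at hi; exact absurd x.2 (by omega)
  rw [Gg_adj_iff, lf_point g i hi, rf_point g i hi, lf_int, rf_int]
  have hab : ((g x).1.1.val : ℝ) ≤ ((g x).1.2.val : ℝ) := by exact_mod_cast (g x).2
  constructor
  · rintro ⟨-, h⟩
    simp only [max_le_iff, le_min_iff] at h
    exact ⟨by exact_mod_cast h.1.2, by exact_mod_cast h.2.1⟩
  · rintro ⟨h1, h2⟩
    refine ⟨hne, ?_⟩
    simp only [max_le_iff, le_min_iff]
    have h1' : ((g x).1.1.val : ℝ) ≤ (i.val : ℝ) := by exact_mod_cast h1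
    have h2' : ((i.val : ℕ) : ℝ) ≤ ((g x).1.2.val : ℝ) := by exact_mod_cast h2
    exact ⟨⟨le_refl _, h1'⟩, ⟨h2', hab⟩⟩

lemma Gg_injective : Function.Injective (Gg (n := n) (m := m)) := by
  intro g g' hgg
  funext x
  have key : ∀ i : Fin m, ((g x).1.1.val ≤ i.val ∧ i.val ≤ (g x).1.2.val) ↔
      ((g' x).1.1.val ≤ i.val ∧ i.val ≤ (g' x).1.2.val) := by
    intro i
    have him : (⟨i.val, lt_of_lt_of_le i.2 (le_of_lt (lt_of_le_of_lt x.2 x.1.2))⟩ : Fin n).val < m := i.2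
    rw [← Gg_adj_point g _ him x, ← Gg_adj_point g' _ him x, hgg]
  have h1 := (key (g x).1.1).1 ⟨le_refl _, (g x).2⟩
  have h2 := (key (g x).1.2).1 ⟨(g x).2, le_refl _⟩
  have h3 := (key (g' x).1.1).2 ⟨le_refl _, (g' x).2⟩
  have h4 := (key (g' x).1.2).2 ⟨(g' x).2, le_refl _⟩
  have e1 : (g x).1.1 = (g' x).1.1 := Fin.le_antisymm h3.1 h1.1
  have e2 : (g x).1.2 = (g' x).1.2 := Fin.le_antisymm h2.2 h4.2
  exact Subtype.ext (Prod.ext e1 e2)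

/-! ### Cardinalities -/

lemma card_Bv (h : m ≤ n) : Fintype.card (Bv n m) = n - m := by
  rw [Fintype.card_subtype]
  rw [Finset.filter_congr (fun v _ => by rw [show (m ≤ v.val) = (¬ v.val < m) by simp])]
  rw [Finset.filter_not, Finset.card_sdiff_of_subset (Finset.filter_subset _ _)]
  congr 1
  · simp
  · rw [← Fintype.card_subtype]; exact Fintype.card_fin_lt_of_le h

lemma card_Pm (m : ℕ) : m * m ≤ 2 * Fintype.card (Pm m) := by
  have hsurj : Function.Surjective (fun x : Pm m ⊕ Pm m => match x with
    | Sum.inl p => p.1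
    | Sum.inr p => (p.1.2, p.1.1)) := by
    rintro ⟨a, b⟩
    rcases le_total a b with h | h
    · exact ⟨Sum.inl ⟨(a, b), h⟩, rfl⟩
    · exact ⟨Sum.inr ⟨(b, a), h⟩, rfl⟩
  have := Fintype.card_le_of_surjective _ hsurj
  simpa [Fintype.card_sum, two_mul] using this

lemma one_le_card_Pm (h : 1 ≤ m) : 1 ≤ Fintype.card (Pm m) := by
  have : Nonempty (Pm m) := ⟨⟨(⟨0, h⟩, ⟨0, h⟩), le_refl _⟩⟩
  exact Fintype.card_pos

/-! ### Extracting pairwise non-isomorphic representatives -/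

open Classical in
lemma exists_reps (T : Finset (SimpleGraph (Fin n))) :
    ∃ S : Finset (SimpleGraph (Fin n)), S ⊆ T ∧
      (∀ G ∈ S, ∀ H ∈ S, G ≠ H → IsEmpty (G ≃g H)) ∧
      ∀ H ∈ T, ∃ G ∈ S, Nonempty (G ≃g H) := by
  induction T using Finset.strongInduction with
  | _ T ih =>
    rcases T.eq_empty_or_nonempty with rfl | ⟨H0, hH0⟩
    · exact ⟨∅, by simp⟩
    · set T' := T.filter (fun H' => ¬ Nonempty (H0 ≃g H')) with hT'
      have hsub : T' ⊆ T := filter_subset _ _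
      have hss : T' ⊂ T := ssubset_iff_of_subset hsub |>.2 ⟨H0, hH0, by simp [hT']⟩
      obtain ⟨S', hS'sub, hS'pair, hS'cov⟩ := ih T' hss
      refine ⟨insert H0 S', ?_, ?_, ?_⟩
      · exact insert_subset hH0 (hS'sub.trans hsub)
      · intro G hG H hH hne
        constructor; intro φ
        rcases mem_insert.1 hG with rfl | hG' <;> rcases mem_insert.1 hH with rfl | hH'
        · exact hne rfl
        · exact (mem_filter.1 (hS'sub hH')).2 ⟨φ⟩
        · exact (mem_filter.1 (hS'sub hG')).2 ⟨φ.symm⟩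
        · exact (hS'pair G hG' H hH' hne).false φ
      · intro H hH
        by_cases hiso : Nonempty (H0 ≃g H)
        · exact ⟨H0, mem_insert_self _ _, hiso⟩
        · obtain ⟨G, hG, hGH⟩ := hS'cov H (mem_filter.2 ⟨hH, hiso⟩)
          exact ⟨G, mem_insert_of_mem hG, hGH⟩

lemma map_of_iso {G H : SimpleGraph (Fin n)} (φ : G ≃g H) :
    G.map φ.toEquiv.toEmbedding = H := by
  ext a b
  rw [SimpleGraph.map_adj]
  constructor
  · rintro ⟨u, v, huv, rfl, rfl⟩
    exact φ.map_rel_iff.2 huv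
  · intro hab
    exact ⟨φ.symm a, φ.symm b, φ.symm.map_rel_iff.2 (by simpa using hab), by simp, by simp⟩

lemma card_le_reps (S T : Finset (SimpleGraph (Fin n)))
    (hcov : ∀ H ∈ T, ∃ G ∈ S, Nonempty (G ≃g H)) :
    T.card ≤ S.card * n.factorial := by
  classical
  have hsub : T ⊆ S.biUnion (fun G =>
      (Finset.univ : Finset (Equiv.Perm (Fin n))).image
        (fun e => G.map e.toEmbedding)) := by
    intro H hH
    obtain ⟨G, hG, ⟨φ⟩⟩ := hcov H hH
    exact mem_biUnion.2 ⟨G, hG, mem_image.2 ⟨φ.toEquiv, mem_univ _, map_of_iso φ⟩⟩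
  calc T.card ≤ _ := card_le_card hsub
    _ ≤ ∑ G ∈ S, ((Finset.univ : Finset (Equiv.Perm (Fin n))).image
        (fun e => G.map e.toEmbedding)).card := card_biUnion_le
    _ ≤ ∑ G ∈ S, n.factorial := by
        refine Finset.sum_le_sum fun G _ => ?_
        calc _ ≤ (Finset.univ : Finset (Equiv.Perm (Fin n))).card := card_image_le
          _ = n.factorial := by rw [card_univ, Fintype.card_perm, Fintype.card_fin]
    _ = S.card * n.factorial := by rw [Finset.sum_const, smul_eq_mul]

/-! ### The numeric core -/

theorem numcore (n : ℕ) (L : ℝ) (c m p : ℕ)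
    (hLdef : Real.logb 2 (n:ℝ) = L) (hL1 : 1 ≤ L) (hB : 8 * L ≤ n)
    (hLc : L ≤ (c : ℝ)) (hcL : (c : ℝ) ≤ 2 * L)
    (hmub : m * c ≤ n) (hmn : m ≤ n)
    (hmlt : (n : ℝ) < (c : ℝ) * ((m : ℝ) + 1))
    (hp : (m : ℝ) ^ 2 ≤ 2 * (p : ℝ)) :
    ((n : ℝ) * L - 2 * n * Real.logb 2 L - 10 * n) + n * L
      ≤ ((n - m : ℕ) : ℝ) * Real.logb 2 (p : ℝ) := by
  have hLpos : (0:ℝ) < L := lt_of_lt_of_le one_pos hL1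
  have hnpos : (0:ℝ) < n := by nlinarith
  have hm_lb : (n : ℝ) / (4 * L) ≤ (m : ℝ) := by
    rw [div_le_iff₀ (by positivity)]
    nlinarith [hmlt, hcL, hLpos]
  have hm2 : (2:ℝ) ≤ (m:ℝ) := by
    have : (2:ℝ) ≤ (n:ℝ)/(4*L) := by rw [le_div_iff₀ (by positivity)]; nlinarith
    linarith
  have hmpos : (0:ℝ) < m := by linarith
  have hppos : (0:ℝ) < p := by nlinarith
  have hplb : (n:ℝ)^2 / (32 * L^2) ≤ (p:ℝ) := by
    have h1 : (n:ℝ)/(4*L) ≥ 0 := by positivity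
    have : (n:ℝ)^2/(16*L^2) ≤ (m:ℝ)^2 := by
      have := mul_self_le_mul_self h1 hm_lb
      calc (n:ℝ)^2/(16*L^2) = ((n:ℝ)/(4*L))*((n:ℝ)/(4*L)) := by ring
        _ ≤ m * m := this
        _ = (m:ℝ)^2 := by ring
    have h3 : (n:ℝ)^2/(32*L^2) = ((n:ℝ)^2/(16*L^2))/2 := by ring
    linarith
  have hlogp : 2*L - 2*Real.logb 2 L - 5 ≤ Real.logb 2 (p:ℝ) := by
    have h0 : (0:ℝ) < (n:ℝ)^2/(32*L^2) := by positivity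
    have h1 : Real.logb 2 ((n:ℝ)^2/(32*L^2)) ≤ Real.logb 2 (p:ℝ) := by
      gcongr
      norm_num
    have h2 : Real.logb 2 ((n:ℝ)^2/(32*L^2)) = 2*L - (5 + 2*Real.logb 2 L) := by
      rw [Real.logb_div (by positivity) (by positivity), Real.logb_pow]
      have h32 : Real.logb 2 (32 * L^2) = 5 + 2 * Real.logb 2 L := by
        rw [Real.logb_mul (by norm_num) (by positivity), Real.logb_pow]
        norm_num
        rw [show (32:ℝ) = 2^(5:ℝ) by norm_num, Real.logb_rpow (by norm_num) (by norm_num)]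
      rw [h32, hLdef]
      ring
    linarith
  have hlogL0 : 0 ≤ Real.logb 2 L := Real.logb_nonneg (by norm_num) hL1
  have hcast : ((n - m : ℕ) : ℝ) = (n:ℝ) - m := by
    rw [Nat.cast_sub hmn]
  rw [hcast]
  have hmL : (m:ℝ) * L ≤ n := by
    calc (m:ℝ)*L ≤ (m:ℝ)*c := by gcongr
      _ ≤ n := by exact_mod_cast hmub
  have hnm0 : (0:ℝ) ≤ (n:ℝ) - m := by
    have : (m:ℝ) ≤ n := by exact_mod_cast hmn
    linarith
  calc ((n : ℝ) * L - 2 * n * Real.logb 2 L - 10 * n) + n * L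
      ≤ ((n:ℝ) - m) * (2*L - 2*Real.logb 2 L - 5) := by nlinarith
    _ ≤ ((n:ℝ) - m) * Real.logb 2 (p:ℝ) := mul_le_mul_of_nonneg_left hlogp hnm0

/-! ### The main lemma for a fixed (large) `n` -/

lemma main_n (n : ℕ) (h2 : 2 ≤ n) (hB : 8 * Real.logb 2 (n:ℝ) ≤ (n:ℝ)) :
    ∃ S : Finset (SimpleGraph (Fin n)),
      (∀ G ∈ S, IsIntervalGraph G) ∧
      (∀ G ∈ S, ∀ H ∈ S, G ≠ H → IsEmpty (G ≃g H)) ∧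
      (2 : ℝ) ^ ((n : ℝ) * Real.logb 2 n - 2 * n * Real.logb 2 (Real.logb 2 n) - 10 * n)
        ≤ (S.card : ℝ) := by
  classical
  set L : ℝ := Real.logb 2 (n:ℝ) with hLdef
  set c : ℕ := Nat.clog 2 n with hc
  set m : ℕ := n / c with hmdef
  have hn1 : (1:ℝ) < (n:ℝ) := by exact_mod_cast h2
  have hnpos : (0:ℝ) < (n:ℝ) := by linarith
  have hL1 : 1 ≤ L := by
    rw [hLdef, show (1:ℝ) = Real.logb 2 2 from (Real.logb_self_eq_one (by norm_num)).symm]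
    gcongr
    · norm_num
    · exact_mod_cast h2
  have hLpos : 0 < L := lt_of_lt_of_le one_pos hL1
  have hc1 : 0 < c := Nat.clog_pos (by norm_num) h2
  have hLc : L ≤ (c:ℝ) := by
    have h := Nat.le_pow_clog (b := 2) (by norm_num) n
    have h' : (n:ℝ) ≤ (2:ℝ) ^ (c:ℕ) := by exact_mod_cast h
    have h'' : Real.logb 2 ((2:ℝ)^(c:ℕ)) = (c:ℝ) := by
      rw [← Real.rpow_natCast 2 c, Real.logb_rpow (by norm_num) (by norm_num)]
    rw [hLdef, ← h'']
    gcongr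
    all_goals first | norm_num | linarith
  have hcL : (c:ℝ) ≤ 2 * L := by
    have h := Nat.pow_pred_clog_lt_self (b := 2) (by norm_num) (show 1 < n by omega)
    have h' : (2:ℝ) ^ ((c - 1 : ℕ) : ℕ) < (n:ℝ) := by exact_mod_cast h
    have h'' : Real.logb 2 ((2:ℝ)^((c-1:ℕ):ℕ)) = ((c-1:ℕ):ℝ) := by
      rw [← Real.rpow_natCast 2 (c-1), Real.logb_rpow (by norm_num) (by norm_num)]
    have h3 : ((c-1:ℕ):ℝ) < L := by
      rw [hLdef, ← h'']
      exact Real.logb_lt_logb (by norm_num) (by positivity) h'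
    have h4 : ((c-1:ℕ):ℝ) = (c:ℝ) - 1 := by
      have h1c : 1 ≤ c := hc1
      rw [Nat.cast_sub h1c, Nat.cast_one]
    rw [h4] at h3
    linarith
  have hmub : m * c ≤ n := Nat.div_mul_le_self n c
  have hmn : m ≤ n := Nat.div_le_self n c
  have hmlt : (n:ℝ) < (c:ℝ) * ((m:ℝ) + 1) := by
    have h1 : m * c + n % c = n := by rw [hmdef]; exact Nat.div_add_mod' n c
    have h2 : n % c < c := Nat.mod_lt _ hc1
    have h3 : n < c * (m + 1) := by
      calc n = m * c + n % c := h1.symm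
        _ < m * c + c := by omega
        _ = c * (m + 1) := by ring
    exact_mod_cast h3
  have hm1 : 1 ≤ m := by
    rw [hmdef, Nat.one_le_div_iff hc1]
    have : (c:ℝ) ≤ (n:ℝ) := by nlinarith
    exact_mod_cast this
  set p : ℕ := Fintype.card (Pm m) with hpdef
  have hp : (m:ℝ)^2 ≤ 2 * (p:ℝ) := by
    have := card_Pm m
    have : ((m*m : ℕ):ℝ) ≤ ((2 * p : ℕ):ℝ) := by exact_mod_cast this
    push_cast at this
    nlinarith
  have hp1 : 1 ≤ p := one_le_card_Pm hm1
  have hppos : (0:ℝ) < (p:ℝ) := by exact_mod_cast hp1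
  -- the family of labeled interval graphs
  set T : Finset (SimpleGraph (Fin n)) :=
    Finset.image (Gg (n := n) (m := m)) Finset.univ with hT
  have hTcard : T.card = p ^ (n - m) := by
    rw [hT, Finset.card_image_of_injective _ Gg_injective, card_univ, Fintype.card_fun,
      card_Bv hmn, hpdef]
  obtain ⟨S, hSsub, hSpair, hScov⟩ := exists_reps T
  refine ⟨S, ?_, hSpair, ?_⟩
  · intro G hG
    obtain ⟨g, -, rfl⟩ := mem_image.1 (hSsub hG)
    exact Gg_isInterval g
  · have hcard := card_le_reps S T hScov
    have hfacpos : (0:ℝ) < (n.factorial : ℝ) := by exact_mod_cast n.factorial_pos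
    set E : ℝ := (n : ℝ) * L - 2 * n * Real.logb 2 L - 10 * n with hE
    have key : (2:ℝ) ^ E * (n.factorial : ℝ) ≤ (T.card : ℝ) := by
      have h1 : (n.factorial : ℝ) ≤ (n:ℝ)^(n:ℕ) := by exact_mod_cast Nat.factorial_le_pow n
      have h2 : (n:ℝ)^(n:ℕ) = (2:ℝ)^((n:ℝ)*L) := by
        conv_lhs => rw [show (n:ℝ) = (2:ℝ)^L from (Real.rpow_logb (by norm_num) (by norm_num) hnpos).symm]
        rw [← Real.rpow_natCast ((2:ℝ)^L) n, ← Real.rpow_mul (by norm_num), mul_comm]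
      have h3 : (T.card : ℝ) = (2:ℝ)^(((n-m:ℕ):ℝ) * Real.logb 2 (p:ℝ)) := by
        rw [hTcard]
        push_cast
        conv_lhs => rw [show (p:ℝ) = (2:ℝ)^(Real.logb 2 (p:ℝ)) from
          (Real.rpow_logb (by norm_num) (by norm_num) hppos).symm]
        rw [← Real.rpow_natCast ((2:ℝ)^(Real.logb 2 (p:ℝ))) (n-m), ← Real.rpow_mul (by norm_num),
          mul_comm]
      calc (2:ℝ) ^ E * (n.factorial : ℝ) ≤ (2:ℝ)^E * (2:ℝ)^((n:ℝ)*L) := by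
            rw [← h2]; exact mul_le_mul_of_nonneg_left h1 (by positivity)
        _ = (2:ℝ)^(E + (n:ℝ)*L) := by rw [← Real.rpow_add (by norm_num)]
        _ ≤ (2:ℝ)^(((n-m:ℕ):ℝ) * Real.logb 2 (p:ℝ)) := by
            apply Real.rpow_le_rpow_of_exponent_le (by norm_num)
            exact numcore n L c m p hLdef.symm hL1 hB hLc hcL hmub hmn hmlt hp
        _ = (T.card : ℝ) := h3.symm
    have hScard : (T.card : ℝ) ≤ (S.card : ℝ) * (n.factorial : ℝ) := by exact_mod_cast hcard
    have : (2:ℝ) ^ E * (n.factorial : ℝ) ≤ (S.card : ℝ) * (n.factorial : ℝ) :=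
      le_trans key hScard
    have := le_of_mul_le_mul_right this hfacpos
    exact this

end IGLB

theorem interval_graph_count_lower_bound :
    ∃ C : ℝ, C > 0 ∧ ∀ᶠ n : ℕ in Filter.atTop,
      ∃ S : Finset (SimpleGraph (Fin n)),
        (∀ G ∈ S, IsIntervalGraph G) ∧
        (∀ G ∈ S, ∀ H ∈ S, G ≠ H → IsEmpty (G ≃g H)) ∧
        (2 : ℝ) ^ ((n : ℝ) * Real.logb 2 n - 2 * n * Real.logb 2 (Real.logb 2 n) - C * n)
          ≤ (S.card : ℝ) := by
  refine ⟨10, by norm_num, ?_⟩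
  have hB : ∀ᶠ n : ℕ in Filter.atTop, 8 * Real.logb 2 (n:ℝ) ≤ (n:ℝ) := by
    have h := Real.isLittleO_log_id_atTop.bound (show (0:ℝ) < Real.log 2 / 8 by positivity)
    have h2 : ∀ᶠ x : ℝ in Filter.atTop, 8 * Real.logb 2 x ≤ x := by
      filter_upwards [h, Filter.eventually_ge_atTop (1:ℝ)] with x hx hx1
      simp only [Real.norm_eq_abs, id_eq] at hx
      rw [abs_of_nonneg (Real.log_nonneg hx1), abs_of_nonneg (by linarith : (0:ℝ) ≤ x)] at hx
      have hlog2 : (0:ℝ) < Real.log 2 := Real.log_pos (by norm_num)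
      calc 8 * Real.logb 2 x = (8 * Real.log x) / Real.log 2 := by rw [Real.logb]; ring
        _ ≤ x := by rw [div_le_iff₀ hlog2]; nlinarith
    exact tendsto_natCast_atTop_atTop.eventually h2
  filter_upwards [hB, Filter.eventually_ge_atTop 2] with n hBn h2n
  exact IGLB.main_n n h2n hBn
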